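/- Let K be a small category, F : K ⥤ K an endofunctor, and O an object of K. The commutative square of categories and functors with vertices F-Mly, the costructured arrow category (F ↓ O) (objects: pairs (E, s : F(E) ⟶ O)), the category Alg(F) of F-algebras, and K — where F-Mly → (F ↓ O) sends (E,d,s) to (E,s), F-Mly → Alg(F) sends (E,d,s) to the algebra (E,d), (F ↓ O) → K and Alg(F) → K are the forgetful functors — is a pullback square in the category Cat of small categories: F-Mly is isomorphic to the strict fiber product of Alg(F) → K ← (F ↓ O). -/

import Mathlib

open CategoryTheory Limits

universe u

/-- An `F`-Mealy machine with output `O`: a carrier `E` with maps `d : F E ⟶ E`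
and `s : F E ⟶ O`. -/
structure FMealy {K : Type u} [SmallCategory K] (F : K ⥤ K) (O : K) : Type u where
  E : K
  d : F.obj E ⟶ E
  s : F.obj E ⟶ O

namespace FMealy

variable {K : Type u} [SmallCategory K] {F : K ⥤ K} {O : K}

/-- A morphism of `F`-Mealy machines. -/
@[ext]
structure Hom (M N : FMealy F O) : Type u where
  f : M.E ⟶ N.E
  hd : M.d ≫ f = F.map f ≫ N.d
  hs : M.s = F.map f ≫ N.s

instance : Category (FMealy F O) where
  Hom := Hom
  id M := ⟨𝟙 M.E, by simp, by simp⟩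
  comp u v := ⟨u.f ≫ v.f, by
      rw [F.map_comp, Category.assoc, ← v.hd, ← Category.assoc, u.hd, Category.assoc], by
      rw [F.map_comp, Category.assoc, ← v.hs, u.hs]⟩
  id_comp u := Hom.ext (Category.id_comp u.f)
  comp_id u := Hom.ext (Category.comp_id u.f)
  assoc u v w := Hom.ext (Category.assoc u.f v.f w.f)

/-- The projection of an `F`-Mealy machine to its output datum, an object of the
costructured arrow category `(F ↓ O)`. -/
def toCostructured (F : K ⥤ K) (O : K) : FMealy F O ⥤ CostructuredArrow F O where
  obj M := CostructuredArrow.mk M.s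
  map {M N} u := CostructuredArrow.homMk u.f (by simpa using u.hs.symm)

/-- The projection of an `F`-Mealy machine to its underlying `F`-algebra. -/
def toAlgebra (F : K ⥤ K) (O : K) : FMealy F O ⥤ Endofunctor.Algebra F where
  obj M := ⟨M.E, M.d⟩
  map {M N} u := ⟨u.f, u.hd.symm⟩

end FMealy

section Aux

namespace FMealy

variable {K : Type u} [SmallCategory K] {F : K ⥤ K} {O : K}

@[simp] lemma comp_f {M N P : FMealy F O} (u : M ⟶ N) (v : N ⟶ P) :
    (u ≫ v).f = u.f ≫ v.f := rfl

@[simp] lemma id_f' (M : FMealy F O) : (𝟙 M : M ⟶ M).f = 𝟙 M.E := rfl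

@[simp]
lemma eqToHom_f {M N : FMealy F O} (h : M = N) :
    (eqToHom h).f = eqToHom (congrArg FMealy.E h) := by
  subst h; rfl

@[simp]
lemma alg_eqToHom_f {A B : Endofunctor.Algebra F} (h : A = B) :
    (eqToHom h).f = eqToHom (congrArg Endofunctor.Algebra.a h) := by
  subst h; rfl

lemma obj_ext {M N : FMealy F O} (hE : M.E = N.E) (hd : HEq M.d N.d)
    (hs : HEq M.s N.s) : M = N := by
  cases M; cases N
  dsimp at hE
  subst hE
  simp only [heq_eq_eq] at hd hs
  rw [hd, hs]

lemma costructured_mk_eq (A : CostructuredArrow F O) {c : K} (h : A.left = c) :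
    CostructuredArrow.mk (eqToHom (congrArg F.obj h.symm) ≫ A.hom) = A := by
  obtain ⟨L, ⟨⟨⟩⟩, f⟩ := A
  subst h
  simp [CostructuredArrow.mk]

variable {X : Type u} [SmallCategory X]

/-- The lift functor for the pullback cone. -/
def mkLift (G : X ⥤ CostructuredArrow F O) (H : X ⥤ Endofunctor.Algebra F)
    (w : G ⋙ CostructuredArrow.proj F O = H ⋙ Endofunctor.Algebra.forget F) :
    X ⥤ FMealy F O where
  obj x :=
    { E := (H.obj x).a
      d := (H.obj x).str
      s := eqToHom (congrArg F.obj (Functor.congr_obj w x).symm) ≫ (G.obj x).hom }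
  map {x y} u :=
    { f := (H.map u).f
      hd := (H.map u).h.symm
      hs := by
        have hw := CostructuredArrow.w (G.map u)
        have hm := Functor.congr_hom w u
        simp only [Functor.comp_map, CostructuredArrow.proj_map] at hm
        dsimp only
        rw [← hw, hm]
        erw [Functor.map_comp, Functor.map_comp, eqToHom_map, eqToHom_map]
        erw [Category.assoc, eqToHom_trans_assoc, eqToHom_refl, Category.id_comp]
        exact Category.assoc _ _ _ }
  map_id x := Hom.ext (by simp)
  map_comp u v := Hom.ext (by simp)

lemma mkLift_fac_left (G : X ⥤ CostructuredArrow F O) (H : X ⥤ Endofunctor.Algebra F)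
    (w : G ⋙ CostructuredArrow.proj F O = H ⋙ Endofunctor.Algebra.forget F) :
    mkLift G H w ⋙ toCostructured F O = G := by
  refine CategoryTheory.Functor.ext (fun x => ?_) (fun x y u => ?_)
  · exact costructured_mk_eq (G.obj x) (Functor.congr_obj w x)
  · apply CostructuredArrow.hom_ext
    have hm := Functor.congr_hom w u
    simp only [Functor.comp_map, CostructuredArrow.proj_map] at hm
    simp [mkLift, toCostructured, hm, CostructuredArrow.eqToHom_left]
    erw [CostructuredArrow.eqToHom_left, CostructuredArrow.eqToHom_left]
    erw [Category.assoc, Category.assoc, eqToHom_trans_assoc, eqToHom_refl, Category.id_comp,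
      eqToHom_trans, eqToHom_refl, Category.comp_id]

lemma mkLift_fac_right (G : X ⥤ CostructuredArrow F O) (H : X ⥤ Endofunctor.Algebra F)
    (w : G ⋙ CostructuredArrow.proj F O = H ⋙ Endofunctor.Algebra.forget F) :
    mkLift G H w ⋙ toAlgebra F O = H := rfl

lemma hom_ext_of_proj (m m' : X ⥤ FMealy F O)
    (h1 : m ⋙ toCostructured F O = m' ⋙ toCostructured F O)
    (h2 : m ⋙ toAlgebra F O = m' ⋙ toAlgebra F O) : m = m' := by
  have hobj : ∀ x, m.obj x = m'.obj x := by
    intro x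
    have hA := Functor.congr_obj h2 x
    have hC := Functor.congr_obj h1 x
    simp only [Functor.comp_obj, toAlgebra, toCostructured] at hA hC
    injection hA with hE hd
    exact obj_ext hE hd (by
      have := congr_arg_heq Comma.hom hC
      simpa using this)
  refine CategoryTheory.Functor.ext hobj (fun x y u => ?_)
  apply Hom.ext
  have key := congrArg Endofunctor.Algebra.Hom.f (Functor.congr_hom h2 u)
  simp only [Functor.comp_map, toAlgebra, Endofunctor.Algebra.comp_f,
    alg_eqToHom_f] at key
  erw [alg_eqToHom_f, alg_eqToHom_f] at key
  simpa using key

end FMealy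

end Aux

/-- The square exhibiting the category of `F`-Mealy machines with output `O` as the
strict fiber product of `Alg(F) → K ← (F ↓ O)` is a pullback square in `Cat`. -/
theorem fMealy_isPullback_in_Cat
    {K : Type u} [SmallCategory K] (F : K ⥤ K) (O : K) :
    IsPullback (C := Cat.{u, u})
      (P := Cat.of (FMealy F O)) (X := Cat.of (CostructuredArrow F O))
      (Y := Cat.of (Endofunctor.Algebra F)) (Z := Cat.of K)
      (FMealy.toCostructured F O).toCatHom (FMealy.toAlgebra F O).toCatHom
      (CostructuredArrow.proj F O).toCatHom (Endofunctor.Algebra.forget F).toCatHom := by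
  have sq : @CommSq Cat.{u, u} _ (Cat.of (FMealy F O)) (Cat.of (CostructuredArrow F O))
      (Cat.of (Endofunctor.Algebra F)) (Cat.of K)
      (FMealy.toCostructured F O).toCatHom (FMealy.toAlgebra F O).toCatHom
      (CostructuredArrow.proj F O).toCatHom (Endofunctor.Algebra.forget F).toCatHom := ⟨rfl⟩
  exact IsPullback.of_isLimit' sq (PullbackCone.IsLimit.mk sq.w
    (fun s => (FMealy.mkLift s.fst.toFunctor s.snd.toFunctor
      (congrArg Cat.Hom.toFunctor s.condition)).toCatHom)
    (fun s => Cat.Hom.ext (FMealy.mkLift_fac_left s.fst.toFunctor s.snd.toFunctor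
      (congrArg Cat.Hom.toFunctor s.condition)))
    (fun s => Cat.Hom.ext (FMealy.mkLift_fac_right s.fst.toFunctor s.snd.toFunctor
      (congrArg Cat.Hom.toFunctor s.condition)))
    (fun s m hl hr => Cat.Hom.ext (FMealy.hom_ext_of_proj m.toFunctor
      (FMealy.mkLift s.fst.toFunctor s.snd.toFunctor (congrArg Cat.Hom.toFunctor s.condition))
      ((congrArg Cat.Hom.toFunctor hl).trans (FMealy.mkLift_fac_left s.fst.toFunctor
        s.snd.toFunctor (congrArg Cat.Hom.toFunctor s.condition)).symm)
      ((congrArg Cat.Hom.toFunctor hr).trans (FMealy.mkLift_fac_right s.fst.toFunctor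
        s.snd.toFunctor (congrArg Cat.Hom.toFunctor s.condition)).symm))))
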